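/- Fix d ≥ 2 and p ∈ (0,1), and let f be the pmf on {0,1}^d with f((0,…,0)) = 1-p, f((1,…,1)) = p, and f(i) = 0 otherwise (the comonotonic Bernoulli vector with all margins p). Then Spearman's rho derived from average lower orthant dependence of the corresponding GFGM copula C_f equals ρ^{cL} = ((d+1)/(2^d - d - 1))·( (2/(2-p))^d·( (1-p)·(1-p)^d + p·((3-2p)/2)^d ) - 1 ). -/

import Mathlib

set_option maxHeartbeats 1000000


open MeasureTheory ProbabilityTheory Set

/-- The real value (`0` or `1`) of a Bernoulli outcome. -/
noncomputable def bval (b : Bool) : ℝ := if b then 1 else 0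

lemma indicator_box_prod {d : ℕ} (g : ℝ → ℝ) (u : Fin d → ℝ) :
    (Icc (0 : Fin d → ℝ) 1).indicator (fun u => ∏ m, g (u m)) u
      = ∏ m, (Icc (0:ℝ) 1).indicator g (u m) := by
  by_cases h : u ∈ Icc (0 : Fin d → ℝ) 1
  · rw [Set.indicator_of_mem h]
    refine Finset.prod_congr rfl fun m _ => ?_
    exact (Set.indicator_of_mem (Set.mem_Icc.mpr
      ⟨by simpa using h.1 m, by simpa using h.2 m⟩) g).symm
  · rw [Set.indicator_of_notMem h]
    have : ∃ m, u m ∉ Icc (0:ℝ) 1 := by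
      by_contra hc
      push_neg at hc
      exact h ⟨fun m => (hc m).1, fun m => (hc m).2⟩
    obtain ⟨m, hm⟩ := this
    exact (Finset.prod_eq_zero (Finset.mem_univ m)
      (Set.indicator_of_notMem hm g)).symm

lemma box_integral_prod {d : ℕ} (g : ℝ → ℝ) :
    (∫ u in Icc (0 : Fin d → ℝ) 1, ∏ m, g (u m))
      = (∫ x in Icc (0:ℝ) 1, g x) ^ d := by
  rw [← integral_indicator measurableSet_Icc]
  simp_rw [indicator_box_prod]
  rw [MeasureTheory.volume_pi, MeasureTheory.integral_fintype_prod_eq_pow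
    ((Icc (0:ℝ) 1).indicator g), integral_indicator measurableSet_Icc,
    Fintype.card_fin]

/-- Fix `d ≥ 2` and `p ∈ (0,1)`, and let `f` be the pmf of the comonotonic Bernoulli
vector with all margins `p`.  Then Spearman's rho from average lower orthant dependence
of the corresponding GFGM copula equals
`ρ^{cL} = ((d+1)/(2^d-d-1)) ((2/(2-p))^d ((1-p)(1-p)^d + p((3-2p)/2)^d) - 1)`. -/
theorem gfgm_epd_rho_cL
    (d : ℕ) (hd : 2 ≤ d) (p : ℝ) (hp : p ∈ Ioo (0 : ℝ) 1)
    (f : (Fin d → Bool) → ℝ)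
    (hf : ∀ i, f i = if i = (fun _ => false) then 1 - p
      else if i = (fun _ => true) then p else 0) :
    ((d : ℝ) + 1) / (2 ^ d - d - 1) *
        ((2 : ℝ) ^ d * (∫ u in Icc (0 : Fin d → ℝ) 1, ∑ i : Fin d → Bool,
          f i * ∏ m, (u m ^ (1 - p)⁻¹ - bval (i m) * ((u m ^ (1 - p)⁻¹ - u m) / p))) - 1)
      = ((d : ℝ) + 1) / (2 ^ d - d - 1) *
          ((2 / (2 - p)) ^ d * ((1 - p) * (1 - p) ^ d + p * ((3 - 2 * p) / 2) ^ d) - 1) := by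
  obtain ⟨hp0, hp1⟩ := hp
  have hp' : p ≠ 0 := ne_of_gt hp0
  have h1p : (0:ℝ) < 1 - p := by linarith
  have h1p' : (1:ℝ) - p ≠ 0 := ne_of_gt h1p
  have h2p : (0:ℝ) < 2 - p := by linarith
  have h2p' : (2:ℝ) - p ≠ 0 := ne_of_gt h2p
  set a : ℝ := (1 - p)⁻¹ with ha
  clear_value a
  have ha0 : 0 < a := by rw [ha]; positivity
  have ha1 : a + 1 ≠ 0 := by positivity
  -- pointwise simplification of the sum
  have hne : (fun _ : Fin d => false) ≠ (fun _ : Fin d => true) := by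
    intro h
    have := congrFun h ⟨0, by omega⟩
    simp at this
  have hsum : ∀ u : Fin d → ℝ,
      (∑ i : Fin d → Bool, f i * ∏ m, (u m ^ a - bval (i m) * ((u m ^ a - u m) / p)))
        = (1 - p) * ∏ m, u m ^ a + p * ∏ m, (u m ^ a - (u m ^ a - u m) / p) := by
    intro u
    have : ∀ i : Fin d → Bool,
        f i * ∏ m, (u m ^ a - bval (i m) * ((u m ^ a - u m) / p))
          = (if i = (fun _ => false) then (1 - p) * ∏ m, u m ^ a else 0)
            + (if i = (fun _ => true) then p * ∏ m, (u m ^ a - (u m ^ a - u m) / p) else 0) := by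
      intro i
      rw [hf i]
      by_cases h0 : i = (fun _ => false)
      · subst h0
        simp [hne, bval]
      · by_cases h1 : i = (fun _ => true)
        · subst h1
          simp [hne.symm, bval]
        · simp [h0, h1]
    simp_rw [this, Finset.sum_add_distrib, Finset.sum_ite_eq' Finset.univ,
      Finset.mem_univ, if_true]
  simp_rw [hsum]
  -- integrability facts
  have hcont : Continuous fun x : ℝ => x ^ a := Real.continuous_rpow_const ha0.le
  have hint1 : IntegrableOn (fun x : ℝ => x ^ a) (Icc 0 1) := hcont.integrableOn_Icc
  have hint2 : IntegrableOn (fun x : ℝ => x ^ a - (x ^ a - x) / p) (Icc 0 1) :=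
    ((hcont.sub ((hcont.sub continuous_id).div_const p))).integrableOn_Icc
  have hIA : Integrable (fun u : Fin d → ℝ => ∏ m, (u m) ^ a)
      ((volume : Measure (Fin d → ℝ)).restrict (Icc 0 1)) := by
    apply Continuous.integrableOn_Icc
    exact continuous_finset_prod _ fun m _ => hcont.comp (continuous_apply m)
  have hIB : Integrable (fun u : Fin d → ℝ => ∏ m, ((u m) ^ a - ((u m) ^ a - u m) / p))
      ((volume : Measure (Fin d → ℝ)).restrict (Icc 0 1)) := by
    apply Continuous.integrableOn_Icc
    refine continuous_finset_prod _ fun m _ => ?_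
    exact ((hcont.comp (continuous_apply m)).sub
      (((hcont.comp (continuous_apply m)).sub (continuous_apply m)).div_const p))
  -- split the integral
  rw [integral_add (hIA.const_mul _) (hIB.const_mul _), integral_const_mul,
    integral_const_mul, box_integral_prod (fun x => x ^ a),
    box_integral_prod (fun x => x ^ a - (x ^ a - x) / p)]
  -- one-dimensional integrals
  have hI1 : (∫ x in Icc (0:ℝ) 1, x ^ a) = (1 - p) / (2 - p) := by
    rw [integral_Icc_eq_integral_Ioc, ← intervalIntegral.integral_of_le zero_le_one,
      integral_rpow (Or.inl (by linarith))]
    rw [Real.one_rpow, Real.zero_rpow ha1]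
    rw [ha]
    rw [sub_zero, show (1-p)⁻¹ + 1 = (2-p)/(1-p) by field_simp; ring]
    rw [one_div_div]
  have hIid : (∫ x in Icc (0:ℝ) 1, x) = 1 / 2 := by
    rw [integral_Icc_eq_integral_Ioc, ← intervalIntegral.integral_of_le zero_le_one,
      integral_id]
    norm_num
  have hI2 : (∫ x in Icc (0:ℝ) 1, (x ^ a - (x ^ a - x) / p)) = (3 - 2*p) / (2 * (2 - p)) := by
    have e1 : (∫ x in Icc (0:ℝ) 1, (x ^ a - (x ^ a - x) / p))
        = (∫ x in Icc (0:ℝ) 1, x ^ a) - ∫ x in Icc (0:ℝ) 1, (x ^ a - x) / p :=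
      integral_sub hint1 (((hcont.sub continuous_id).div_const p).integrableOn_Icc)
    have e2 : (∫ x in Icc (0:ℝ) 1, (x ^ a - x) / p)
        = (∫ x in Icc (0:ℝ) 1, (x ^ a - x)) / p := integral_div p _
    have e3 : (∫ x in Icc (0:ℝ) 1, (x ^ a - x))
        = (∫ x in Icc (0:ℝ) 1, x ^ a) - ∫ x in Icc (0:ℝ) 1, x :=
      integral_sub hint1 (continuous_id.integrableOn_Icc)
    rw [e1, e2, e3, hI1, hIid]
    field_simp
    ring
  rw [hI1, hI2]
  -- final algebra
  have key : (2:ℝ)^d * ((1 - p) * ((1 - p) / (2 - p))^d + p * ((3 - 2*p) / (2 * (2 - p)))^d)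
      = (2 / (2 - p))^d * ((1 - p) * (1 - p)^d + p * ((3 - 2*p) / 2)^d) := by
    have b1 : (2:ℝ) * ((1 - p) / (2 - p)) = 2 / (2 - p) * (1 - p) := by ring
    have b2 : (2:ℝ) * ((3 - 2*p) / (2 * (2 - p))) = 2 / (2 - p) * ((3 - 2*p) / 2) := by
      rw [div_mul_div_comm]
      rw [mul_div_assoc]
      congr 1
      ring
    calc (2:ℝ)^d * ((1 - p) * ((1 - p) / (2 - p))^d + p * ((3 - 2*p) / (2 * (2 - p)))^d)
        = (1 - p) * ((2:ℝ) * ((1 - p) / (2 - p)))^d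
            + p * ((2:ℝ) * ((3 - 2*p) / (2 * (2 - p))))^d := by
          rw [mul_pow, mul_pow]; ring
      _ = (1 - p) * (2 / (2 - p) * (1 - p))^d + p * (2 / (2 - p) * ((3 - 2*p) / 2))^d := by
          rw [b1, b2]
      _ = (2 / (2 - p))^d * ((1 - p) * (1 - p)^d + p * ((3 - 2*p) / 2)^d) := by
          rw [mul_pow, mul_pow]; ring
  rw [key]
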